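/- arXiv:1501.00248 — 2 statements merged into one kernel-verified Lean document; each statement's English description precedes it below -/
import Mathlib

section
/- Let R be a commutative ring, M ≥ 1 an integer, and R = I_0 ⊇ I_1 ⊇ I_2 ⊇ ⋯ ⊇ I_M a descending chain of ideals of R. Let 𝓘 ⊆ R[t] be the flag ideal 𝓘 = I_M + I_{M−1}·t + ⋯ + I_1·t^{M−1} + (t^M), i.e. the ideal of R[t] generated by t^M together with all elements a·t^{M−j} with a ∈ I_j, 1 ≤ j ≤ M. Then for every integer p ≥ 1, the p-th power satisfies 𝓘^p = Ĩ_{Mp} + Ĩ_{Mp−1}·t + ⋯ + Ĩ_1·t^{Mp−1} + (t^{Mp}), where for 0 ≤ j ≤ Mp one defines Ĩ_j := Σ I_{j_1}·I_{j_2}⋯I_{j_p}, the sum ranging over all tuples (j_1,…,j_p) of integers with 0 ≤ j_1,…,j_p ≤ M and j_1 + ⋯ + j_p = j (with I_0 = R). -/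
open Polynomial Pointwise

/-- The flag ideal `I_M + I_{M-1} t + ⋯ + I_1 t^{M-1} + (t^M)` in `R[t]` associated to a
chain of ideals `I 1 ⊇ ⋯ ⊇ I M` of `R`: the ideal generated by `t^M` together with all
elements `a * t^(M - j)` with `a ∈ I j`, `1 ≤ j ≤ M`. -/
noncomputable def flagIdeal {R : Type*} [CommRing R] (M : ℕ) (I : ℕ → Ideal R) : Ideal (Polynomial R) :=
  Ideal.span ({Polynomial.X ^ M} ∪
    ⋃ j ∈ Finset.Icc 1 M, (fun a : R => Polynomial.C a * Polynomial.X ^ (M - j)) '' (I j : Set R))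

/-- If every product of elements chosen from the ideals lies in `K`, then the product of the
ideals is contained in `K`. -/
private lemma prod_le_of_forall {R : Type*} [CommRing R] {ι : Type*} (s : Finset ι)
    (I : ι → Ideal R) :
    ∀ K : Ideal R, (∀ a : ι → R, (∀ i ∈ s, a i ∈ I i) → (∏ i ∈ s, a i) ∈ K) →
      (∏ i ∈ s, I i) ≤ K := by
  classical
  induction s using Finset.induction_on with
  | empty =>
      intro K h
      have h1 : (1 : R) ∈ K := by simpa using h (fun _ => 1) (by simp)
      rw [Finset.prod_empty, Ideal.one_eq_top, top_le_iff, Ideal.eq_top_iff_one]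
      exact h1
  | @insert i s hi ih =>
      intro K h
      rw [Finset.prod_insert hi, Ideal.mul_le]
      intro r hr x hx
      have hx' : x ∈ Submodule.comap (LinearMap.toSpanSingleton R R r) K := by
        refine ih _ ?_ hx
        intro a ha
        have h' : ∀ j ∈ insert i s, Function.update a i r j ∈ I j := by
          intro j hj
          rcases Finset.mem_insert.1 hj with rfl | hj
          · simpa [Function.update_self] using hr
          · have hne : j ≠ i := fun hji => hi (by rw [← hji]; exact hj)
            simpa [Function.update_of_ne hne] using ha j hj
        have := h _ h'
        rw [Finset.prod_insert hi, Function.update_self] at this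
        have hprod : ∏ j ∈ s, Function.update a i r j = ∏ j ∈ s, a j := by
          refine Finset.prod_congr rfl fun j hj => ?_
          exact Function.update_of_ne (fun hji => hi (by rw [← hji]; exact hj)) _ _
        rw [hprod] at this
        simpa [Submodule.mem_comap, LinearMap.toSpanSingleton_apply, smul_eq_mul,
          mul_comm] using this
      simpa [Submodule.mem_comap, LinearMap.toSpanSingleton_apply, smul_eq_mul,
        mul_comm] using hx'

private lemma mem_flagIdeal_of {R : Type*} [CommRing R] (M : ℕ) (I : ℕ → Ideal R) {j : ℕ}
    (hj : j ≤ M) {a : R} (ha : a ∈ I j) :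
    Polynomial.C a * Polynomial.X ^ (M - j) ∈ flagIdeal M I := by
  rcases Nat.eq_zero_or_pos j with rfl | hj1
  · have hX : (Polynomial.X : Polynomial R) ^ M ∈ flagIdeal M I :=
      Ideal.subset_span (Set.mem_union_left _ rfl)
    simpa using Ideal.mul_mem_left _ (Polynomial.C a) hX
  · refine Ideal.subset_span (Set.mem_union_right _ ?_)
    simp only [Set.mem_iUnion]
    exact ⟨j, Finset.mem_Icc.2 ⟨hj1, hj⟩, Set.mem_image_of_mem _ ha⟩

private lemma prod_C_mul_X {R : Type*} [CommRing R] {p M : ℕ} (b : Fin p → R) (f : Fin p → ℕ)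
    (hf : ∀ i, f i ≤ M) :
    ∏ i, (Polynomial.C (b i) * Polynomial.X ^ (M - f i)) =
      Polynomial.C (∏ i, b i) * Polynomial.X ^ (M * p - ∑ i, f i) := by
  rw [Finset.prod_mul_distrib, ← map_prod, Finset.prod_pow_eq_pow_sum]
  congr 2
  have h1 : ∑ i, (M - f i) + ∑ i, f i = M * p := by
    rw [← Finset.sum_add_distrib]
    rw [Finset.sum_congr rfl fun i _ => Nat.sub_add_cancel (hf i), Finset.sum_const,
      Finset.card_univ, Fintype.card_fin, smul_eq_mul, mul_comm]
  omega

private lemma sum_le_of {p M : ℕ} (f : Fin p → ℕ) (hf : ∀ i, f i ≤ M) :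
    ∑ i, f i ≤ M * p := by
  calc ∑ i, f i ≤ ∑ _i : Fin p, M := Finset.sum_le_sum fun i _ => hf i
  _ = M * p := by rw [Finset.sum_const, Finset.card_univ, Fintype.card_fin, smul_eq_mul, mul_comm]

/-- Lemma 4.1(1) of the paper (algebraic content): for a flag ideal
`𝓘 = I_M + I_{M-1} t + ⋯ + I_1 t^{M-1} + (t^M)` associated to a descending chain
`R = I_0 ⊇ I_1 ⊇ ⋯ ⊇ I_M`, its `p`-th power is the flag ideal
`Ĩ_{Mp} + Ĩ_{Mp-1} t + ⋯ + Ĩ_1 t^{Mp-1} + (t^{Mp})`, where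
`Ĩ_j = ∑_{j_1 + ⋯ + j_p = j, 0 ≤ j_i ≤ M} I_{j_1} ⋯ I_{j_p}`. -/
theorem flagIdeal_pow {R : Type*} [CommRing R] (M : ℕ) (hM : 1 ≤ M) (I : ℕ → Ideal R)
    (hI0 : I 0 = ⊤) (hchain : ∀ j : ℕ, j < M → I (j + 1) ≤ I j) (p : ℕ) (hp : 1 ≤ p) :
    (flagIdeal M I) ^ p =
      flagIdeal (M * p) (fun j =>
        ⨆ f : {f : Fin p → ℕ // (∀ i, f i ≤ M) ∧ ∑ i, f i = j},
          ∏ i : Fin p, I (f.1 i)) := by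
  classical
  set S : Set (Polynomial R) := ({Polynomial.X ^ M} : Set (Polynomial R)) ∪
    ⋃ j ∈ Finset.Icc 1 M,
      (fun a : R => Polynomial.C a * Polynomial.X ^ (M - j)) '' (I j : Set R) with hS
  have hdec : ∀ g ∈ S, ∃ j, j ≤ M ∧ ∃ a, a ∈ I j ∧ g = Polynomial.C a * Polynomial.X ^ (M - j) := by
    intro g hg
    rcases hg with hg | hg
    · refine ⟨0, Nat.zero_le _, 1, by simp [hI0], ?_⟩
      simp only [Set.mem_singleton_iff] at hg
      simp [hg]
    · simp only [Set.mem_iUnion, Set.mem_image] at hg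
      obtain ⟨j, hj, a, ha, rfl⟩ := hg
      exact ⟨j, (Finset.mem_Icc.1 hj).2, a, ha, rfl⟩
  have hpow : (flagIdeal M I) ^ p = Ideal.span (S ^ p) := by
    rw [flagIdeal, ← hS]
    exact Submodule.span_pow S p
  rw [hpow]
  apply le_antisymm
  · rw [Ideal.span_le]
    intro x hx
    rw [Set.mem_pow] at hx
    obtain ⟨f, hf⟩ := hx
    choose j hjM a ha hfa using fun i => hdec (f i : Polynomial R) (f i).2
    have hx' : x = Polynomial.C (∏ i, a i) * Polynomial.X ^ (M * p - ∑ i, j i) := by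
      rw [← hf, List.prod_ofFn, Finset.prod_congr rfl fun i _ => hfa i,
        prod_C_mul_X a j hjM]
    have hA : (∏ i, a i) ∈ ⨆ g : {f : Fin p → ℕ // (∀ i, f i ≤ M) ∧ ∑ i, f i = ∑ i, j i},
        ∏ i : Fin p, I (g.1 i) := by
      refine le_iSup (fun g : {f : Fin p → ℕ // (∀ i, f i ≤ M) ∧ ∑ i, f i = ∑ i, j i} =>
        ∏ i : Fin p, I (g.1 i)) ⟨j, hjM, rfl⟩ ?_
      exact Ideal.prod_mem_prod fun i _ => ha i
    rw [hx']
    exact mem_flagIdeal_of (M * p) _ (sum_le_of j hjM) hA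
  · rw [flagIdeal, Ideal.span_le]
    rintro g (hg | hg)
    · simp only [Set.mem_singleton_iff] at hg
      subst hg
      rw [pow_mul]
      have hXM : (Polynomial.X : Polynomial R) ^ M ∈ S := Set.mem_union_left _ rfl
      exact Ideal.subset_span (Set.pow_mem_pow hXM)
    · simp only [Set.mem_iUnion, Set.mem_image] at hg
      obtain ⟨k, hk, a, ha, rfl⟩ := hg
      -- show `C a * X ^ (M*p - k) ∈ span (S ^ p)` for `a` in the sup.
      set K : Ideal R := Submodule.comap
        (LinearMap.toSpanSingleton R (Polynomial R) (Polynomial.X ^ (M * p - k)))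
        (Submodule.restrictScalars R (Ideal.span (S ^ p))) with hK
      have hsupK : (⨆ f : {f : Fin p → ℕ // (∀ i, f i ≤ M) ∧ ∑ i, f i = k},
          ∏ i : Fin p, I (f.1 i)) ≤ K := by
        refine iSup_le fun g => ?_
        obtain ⟨f, hfM, hfsum⟩ := g
        refine prod_le_of_forall Finset.univ _ K ?_
        intro b hb
        simp only [hK, Submodule.mem_comap, LinearMap.toSpanSingleton_apply,
          Submodule.restrictScalars_mem]
        rw [Polynomial.smul_eq_C_mul]
        -- key computation
        set gP : Fin p → Polynomial R := fun i =>
          if f i = 0 then Polynomial.X ^ M else Polynomial.C (b i) * Polynomial.X ^ (M - f i)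
          with hgP
        have hmemS : ∀ i, gP i ∈ S := by
          intro i
          by_cases h0 : f i = 0
          · simp only [hgP, h0, if_true]
            exact Set.mem_union_left _ rfl
          · simp only [hgP, h0, if_false]
            refine Set.mem_union_right _ ?_
            simp only [Set.mem_iUnion]
            exact ⟨f i, Finset.mem_Icc.2 ⟨Nat.one_le_iff_ne_zero.2 h0, hfM i⟩,
              Set.mem_image_of_mem _ (hb i (Finset.mem_univ i))⟩
        have hprodS : (∏ i, gP i) ∈ S ^ p := by
          have : S ^ p = ∏ _i : Fin p, S := by
            rw [Finset.prod_const, Finset.card_univ, Fintype.card_fin]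
          rw [this]
          exact Set.finset_prod_mem_finset_prod _ _ _ fun i _ => hmemS i
        have hfactor : ∀ i, Polynomial.C (b i) * Polynomial.X ^ (M - f i) =
            Polynomial.C (if f i = 0 then b i else 1) * gP i := by
          intro i
          by_cases h0 : f i = 0
          · simp [hgP, h0]
          · simp [hgP, h0]
        have hxeq : Polynomial.C (∏ i, b i) * Polynomial.X ^ (M * p - k) =
            Polynomial.C (∏ i, if f i = 0 then b i else 1) * ∏ i, gP i := by
          rw [← hfsum, ← prod_C_mul_X b f hfM, Finset.prod_congr rfl fun i _ => hfactor i,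
            Finset.prod_mul_distrib, map_prod]
        rw [hxeq]
        exact Ideal.mul_mem_left _ _ (Ideal.subset_span hprodS)
      have haK : a ∈ K := hsupK ha
      simpa [hK, Submodule.mem_comap, LinearMap.toSpanSingleton_apply,
        Polynomial.smul_eq_C_mul] using haK
end

section
/- Let k ≥ 1 be an integer, set N := 2k+1, and let c > 0 be a real number. The function ℂ^N → ℝ given by (z_1,…,z_N) ↦ ∏_{1≤i<j≤N} |z_i − z_j|^{−2c/k} is integrable (with respect to Lebesgue measure on ℂ^N ≅ ℝ^{2N}) on some neighborhood of the origin if and only if c < 2k/(2k+1). -/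
open MeasureTheory Metric Finset Set
open scoped ENNReal
noncomputable section
namespace BermanGibbs



lemma ennreal_prod_rpow {ι : Type*} (s : Finset ι) (f : ι → ℝ≥0∞) {r : ℝ} (hr : 0 ≤ r) :
    (∏ i ∈ s, f i) ^ r = ∏ i ∈ s, f i ^ r := by
  classical
  induction s using Finset.cons_induction with
  | empty => simp
  | cons a s ha ih => rw [Finset.prod_cons, Finset.prod_cons, ENNReal.mul_rpow_of_nonneg _ _ hr, ih]

lemma mp_lintegral_comp {α β : Type*} [MeasurableSpace α] [MeasurableSpace β]
    {μ : Measure α} {ν : Measure β} {g : α → β} (hg : MeasurePreserving g μ ν)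
    {f : β → ℝ≥0∞} (hf : Measurable f) :
    ∫⁻ b, f b ∂ν = ∫⁻ a, f (g a) ∂μ := by
  rw [← hg.map_eq, lintegral_map hf hg.measurable]

/-- The shear map `(w, v) ↦ z` with `z j = w` and `z (j.succAbove i) = w + v i`. -/
def shear (n : ℕ) (j : Fin (n + 1)) (p : ℂ × (Fin n → ℂ)) : Fin (n + 1) → ℂ :=
  j.insertNth p.1 (fun i => p.1 + p.2 i)

lemma shear_same (n : ℕ) (j : Fin (n + 1)) (p : ℂ × (Fin n → ℂ)) :
    shear n j p j = p.1 :=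
  Fin.insertNth_apply_same j _ _

lemma shear_succAbove (n : ℕ) (j : Fin (n + 1)) (p : ℂ × (Fin n → ℂ)) (i : Fin n) :
    shear n j p (j.succAbove i) = p.1 + p.2 i :=
  Fin.insertNth_apply_succAbove j _ _ _

lemma measurePreserving_shear (n : ℕ) (j : Fin (n + 1)) :
    MeasurePreserving (shear n j)
      ((volume : Measure ℂ).prod (volume : Measure (Fin n → ℂ))) volume := by
  have h1 : MeasurePreserving (fun p : ℂ × (Fin n → ℂ) => (p.1, fun i => p.1 + p.2 i))
      ((volume : Measure ℂ).prod (volume : Measure (Fin n → ℂ)))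
      ((volume : Measure ℂ).prod (volume : Measure (Fin n → ℂ))) := by
    refine MeasurePreserving.skew_product (g := fun (w : ℂ) (v : Fin n → ℂ) => fun i => w + v i) (μd := (volume : Measure (Fin n → ℂ))) (MeasurePreserving.id _) ?_ ?_
    · exact measurable_pi_lambda _ fun i =>
        measurable_fst.add ((measurable_pi_apply i).comp measurable_snd)
    · refine Filter.Eventually.of_forall fun w => ?_
      exact map_add_left_eq_self volume (fun _ => w)
  have h2 := (volume_preserving_piFinSuccAbove (fun _ : Fin (n + 1) => ℂ) j).symm
  have h3 : shear n j =
      (MeasurableEquiv.piFinSuccAbove (fun _ : Fin (n + 1) => ℂ) j).symm ∘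
        (fun p : ℂ × (Fin n → ℂ) => (p.1, fun i => p.1 + p.2 i)) := by
    funext p
    simp [shear, MeasurableEquiv.piFinSuccAbove_symm_apply, Fin.insertNthEquiv]
  rw [h3]
  exact h2.comp h1

lemma lintegral_shear (n : ℕ) (j : Fin (n + 1)) {F : (Fin (n + 1) → ℂ) → ℝ≥0∞}
    (hF : Measurable F) :
    ∫⁻ z, F z = ∫⁻ p : ℂ × (Fin n → ℂ), F (shear n j p)
      ∂((volume : Measure ℂ).prod (volume : Measure (Fin n → ℂ))) :=
  mp_lintegral_comp (measurePreserving_shear n j) hF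

lemma lintegral_pi_pow (n : ℕ) {g : ℂ → ℝ≥0∞} (hg : Measurable g) :
    ∫⁻ v : Fin n → ℂ, ∏ i, g (v i) = (∫⁻ w, g w) ^ n := by
  induction n with
  | zero =>
    simp [lintegral_const, volume_pi, Measure.pi_univ]
  | succ n ih =>
    have h2 := (volume_preserving_piFinSuccAbove (fun _ : Fin (n + 1) => ℂ) 0).symm
    have hmeas : Measurable fun v : Fin (n + 1) → ℂ => ∏ i, g (v i) :=
      Finset.measurable_prod _ fun i _ => hg.comp (measurable_pi_apply i)
    rw [mp_lintegral_comp h2 hmeas]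
    have key : ∀ p : ℂ × (Fin n → ℂ),
        (∏ i, g ((MeasurableEquiv.piFinSuccAbove (fun _ : Fin (n + 1) => ℂ) 0).symm p i))
          = g p.1 * ∏ i : Fin n, g (p.2 i) := by
      intro p
      have hco : ∀ i : Fin (n + 1),
          (MeasurableEquiv.piFinSuccAbove (fun _ : Fin (n + 1) => ℂ) 0).symm p i
            = (Fin.cons p.1 p.2 : Fin (n+1) → ℂ) i := by
        intro i
        simp [MeasurableEquiv.piFinSuccAbove_symm_apply, Fin.insertNthEquiv, Fin.insertNth_zero]
      simp_rw [hco]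
      rw [Fin.prod_univ_succ]
      simp
    simp_rw [key]
    rw [Measure.volume_eq_prod]
    have hx := MeasureTheory.lintegral_prod_mul (μ := (volume : Measure ℂ))
      (ν := (volume : Measure (Fin n → ℂ))) (f := g)
      (g := fun v : Fin n → ℂ => ∏ i, g (v i)) hg.aemeasurable
      (Finset.measurable_prod _ fun i _ => hg.comp (measurable_pi_apply i)).aemeasurable
    rw [hx, ih, pow_succ']



lemma radial_lt_top {m : ℝ} (hm0 : 0 < m) (hm2 : m < 2) :
    ∫⁻ w : ℂ, (ball (0:ℂ) 2).indicator (fun w => ENNReal.ofReal (‖w‖ ^ (-m))) w < ⊤ := by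
  classical
  set g : ℂ → ℝ≥0∞ := fun w => ENNReal.ofReal (‖w‖ ^ (-m)) with hgdef
  set r : ℕ → ℝ := fun n => (2⁻¹ : ℝ) ^ n with hrdef
  have hrpos : ∀ n, 0 < r n := fun n => pow_pos (by norm_num) n
  set A : ℕ → Set ℂ := fun n => ball (0:ℂ) (2 * r n) \ ball 0 (r n) with hAdef
  have hAmeas : ∀ n, MeasurableSet (A n) := fun n => measurableSet_ball.diff measurableSet_ball
  have hcover : ball (0:ℂ) 2 ⊆ {0} ∪ ⋃ n, A n := by
    intro w hw
    rcases eq_or_ne w 0 with rfl | hw0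
    · exact Or.inl rfl
    · have hwpos : 0 < ‖w‖ := norm_pos_iff.mpr hw0
      have hex : ∃ n, r n ≤ ‖w‖ :=
        (exists_pow_lt_of_lt_one hwpos (by norm_num : (2⁻¹:ℝ) < 1)).imp fun n h => le_of_lt h
      refine Or.inr (Set.mem_iUnion.mpr ⟨Nat.find hex, ?_, ?_⟩)
      · rw [mem_ball_zero_iff]
        rcases Nat.eq_zero_or_pos (Nat.find hex) with h0 | hpos
        · rw [h0]
          simpa [hrdef] using (mem_ball_zero_iff.mp hw)
        · obtain ⟨n', hn'⟩ := Nat.exists_eq_succ_of_ne_zero (Nat.pos_iff_ne_zero.mp hpos)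
          have hmin : ¬ (r n' ≤ ‖w‖) := Nat.find_min hex (by omega)
          have : ‖w‖ < r n' := lt_of_not_ge hmin
          have heq : r n' = 2 * r n'.succ := by
            simp only [hrdef, pow_succ]
            ring
          rw [hn']
          linarith [this, heq]
      · simp only [mem_ball_zero_iff, not_lt]
        exact Nat.find_spec hex
  have key : ∫⁻ w : ℂ, (ball (0:ℂ) 2).indicator g w = ∫⁻ w in ball (0:ℂ) 2, g w :=
    lintegral_indicator measurableSet_ball g
  rw [key]
  set s0 : ℝ := (2⁻¹ : ℝ) ^ (2 - m : ℝ) with hs0def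
  have hs0nonneg : 0 ≤ s0 := Real.rpow_nonneg (by norm_num) _
  have hs0lt1 : s0 < 1 := Real.rpow_lt_one (by norm_num) (by norm_num) (by linarith)
  set C : ℝ≥0∞ := ENNReal.ofReal 4 * NNReal.pi with hCdef
  have hterm : ∀ n, ∫⁻ w in A n, g w ≤ C * (ENNReal.ofReal s0) ^ n := by
    intro n
    have h1 : ∫⁻ w in A n, g w ≤ ∫⁻ _ in A n, ENNReal.ofReal ((r n) ^ (-m)) := by
      refine setLIntegral_mono' (hAmeas n) fun w hw => ?_
      refine ENNReal.ofReal_le_ofReal ?_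
      have hge : r n ≤ ‖w‖ := by
        have := hw.2
        rw [mem_ball_zero_iff] at this
        exact le_of_not_gt this
      exact Real.rpow_le_rpow_of_nonpos (hrpos n) hge (neg_nonpos.mpr hm0.le)
    have h2 : ∫⁻ _ in A n, ENNReal.ofReal ((r n) ^ (-m)) ∂volume
        = ENNReal.ofReal ((r n) ^ (-m)) * volume (A n) := setLIntegral_const _ _
    have h3 : volume (A n) ≤ ENNReal.ofReal (2 * r n) ^ 2 * NNReal.pi := by
      calc volume (A n) ≤ volume (ball (0:ℂ) (2 * r n)) := measure_mono diff_subset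
      _ = ENNReal.ofReal (2 * r n) ^ 2 * NNReal.pi := Complex.volume_ball _ _
    have h4 : ENNReal.ofReal ((r n) ^ (-m)) * (ENNReal.ofReal (2 * r n) ^ 2 * NNReal.pi)
        = C * (ENNReal.ofReal s0) ^ n := by
      have e1 : ENNReal.ofReal (2 * r n) ^ 2 = ENNReal.ofReal ((2 * r n) ^ 2) :=
        (ENNReal.ofReal_pow (by positivity) 2).symm
      have e2 : (r n) ^ (-m) * (2 * r n) ^ 2 = 4 * s0 ^ n := by
        have e3 : (r n : ℝ) ^ (2 : ℕ) = (r n) ^ ((2 : ℕ) : ℝ) := (Real.rpow_natCast _ 2).symm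
        have e4 : (r n) ^ (-m) * (r n) ^ ((2:ℕ):ℝ) = (r n) ^ (2 - m) := by
          rw [← Real.rpow_add (hrpos n)]
          norm_num
          ring_nf
        have e5 : (r n) ^ (2 - m : ℝ) = s0 ^ n := by
          show ((2⁻¹:ℝ) ^ n : ℝ) ^ (2 - m : ℝ) = ((2⁻¹:ℝ) ^ (2 - m : ℝ)) ^ n
          rw [← Real.rpow_natCast (2⁻¹:ℝ) n, ← Real.rpow_mul (by norm_num : (0:ℝ) ≤ 2⁻¹),
            mul_comm, Real.rpow_mul (by norm_num : (0:ℝ) ≤ 2⁻¹), Real.rpow_natCast]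
        calc (r n) ^ (-m) * (2 * r n) ^ 2 = 4 * ((r n) ^ (-m) * (r n) ^ (2:ℕ)) := by ring
        _ = 4 * (r n) ^ (2 - m : ℝ) := by rw [e3, e4]
        _ = 4 * s0 ^ n := by rw [e5]
      rw [e1, ← mul_assoc, ← ENNReal.ofReal_mul (Real.rpow_nonneg (hrpos n).le _), e2,
        ENNReal.ofReal_mul (by norm_num), ENNReal.ofReal_pow hs0nonneg, hCdef]
      ring
    calc ∫⁻ w in A n, g w ≤ ENNReal.ofReal ((r n) ^ (-m)) * volume (A n) := h1.trans (le_of_eq h2)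
    _ ≤ ENNReal.ofReal ((r n) ^ (-m)) * (ENNReal.ofReal (2 * r n) ^ 2 * NNReal.pi) :=
        mul_le_mul_right h3 _
    _ = C * (ENNReal.ofReal s0) ^ n := h4
  have hsum : ∑' n, (C * (ENNReal.ofReal s0) ^ n) < ⊤ := by
    rw [ENNReal.tsum_mul_left, ENNReal.tsum_geometric]
    have hq1 : ENNReal.ofReal s0 < 1 := by
      rw [show (1 : ℝ≥0∞) = ENNReal.ofReal 1 by simp]
      exact ENNReal.ofReal_lt_ofReal_iff_of_nonneg hs0nonneg |>.mpr hs0lt1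
    have : (1 - ENNReal.ofReal s0)⁻¹ ≠ ⊤ :=
      ENNReal.inv_ne_top.mpr (ne_of_gt (tsub_pos_of_lt hq1))
    exact ENNReal.mul_lt_top (by simp [hCdef, ENNReal.mul_lt_top]) this.lt_top
  calc ∫⁻ w in ball (0:ℂ) 2, g w ≤ ∫⁻ w in ({0} ∪ ⋃ n, A n), g w := lintegral_mono_set hcover
  _ ≤ (∫⁻ w in ({0} : Set ℂ), g w) + ∫⁻ w in ⋃ n, A n, g w := lintegral_union_le _ _ _
  _ = ∫⁻ w in ⋃ n, A n, g w := by
      rw [setLIntegral_measure_zero _ _ (measure_singleton 0), zero_add]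
  _ ≤ ∑' n, ∫⁻ w in A n, g w := lintegral_iUnion_le _ _
  _ ≤ ∑' n, (C * (ENNReal.ofReal s0) ^ n) := ENNReal.tsum_le_tsum hterm
  _ < ⊤ := hsum



/-- the function in the theorem -/
noncomputable def fBG (k : ℕ) (c : ℝ) (z : Fin (2*k+1) → ℂ) : ℝ :=
  ∏ i, ∏ j ∈ Finset.Ioi i, ‖z i - z j‖ ^ (-(2*c/(k:ℝ)))

/-- its ENNReal avatar -/
noncomputable def FBG (k : ℕ) (c : ℝ) (z : Fin (2*k+1) → ℂ) : ℝ≥0∞ :=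
  ∏ i, ∏ j ∈ Finset.Ioi i, ENNReal.ofReal (‖z i - z j‖ ^ (-(2*c/(k:ℝ))))

/-- auxiliary Hölder factors -/
noncomputable def G2 (k : ℕ) (c : ℝ) (j : Fin (2*k+1)) (z : Fin (2*k+1) → ℂ) : ℝ≥0∞ :=
  ∏ i : Fin (2*k), ENNReal.ofReal (‖z (j.succAbove i) - z j‖ ^ (-((2*(k:ℝ)+1) * c / k)))

lemma fBG_nonneg (k : ℕ) (c : ℝ) (z : Fin (2*k+1) → ℂ) : 0 ≤ fBG k c z :=
  Finset.prod_nonneg fun i _ => Finset.prod_nonneg fun j _ => Real.rpow_nonneg (norm_nonneg _) _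

lemma ofReal_fBG (k : ℕ) (c : ℝ) (z : Fin (2*k+1) → ℂ) :
    ENNReal.ofReal (fBG k c z) = FBG k c z := by
  rw [fBG, FBG, ENNReal.ofReal_prod_of_nonneg
    (fun i _ => Finset.prod_nonneg fun j _ => Real.rpow_nonneg (norm_nonneg _) _)]
  exact Finset.prod_congr rfl fun i _ => ENNReal.ofReal_prod_of_nonneg
    (fun j _ => Real.rpow_nonneg (norm_nonneg _) _)

lemma measurable_fBG (k : ℕ) (c : ℝ) : Measurable (fBG k c) :=
  Finset.measurable_prod _ fun i _ => Finset.measurable_prod _ fun j _ =>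
    (((measurable_pi_apply i).sub (measurable_pi_apply j)).norm).pow measurable_const

lemma measurable_FBG (k : ℕ) (c : ℝ) : Measurable (FBG k c) :=
  Finset.measurable_prod _ fun i _ => Finset.measurable_prod _ fun j _ =>
    ((((measurable_pi_apply i).sub (measurable_pi_apply j)).norm).pow
      measurable_const).ennreal_ofReal

lemma measurable_G2 (k : ℕ) (c : ℝ) (j : Fin (2*k+1)) : Measurable (G2 k c j) :=
  Finset.measurable_prod _ fun i _ =>
    ((((measurable_pi_apply (j.succAbove i)).sub (measurable_pi_apply j)).norm).pow
      measurable_const).ennreal_ofReal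

lemma FBG_eq_prod_G2 (k : ℕ) (hk : 1 ≤ k) (c : ℝ) (hc : 0 < c) (z : Fin (2*k+1) → ℂ) :
    FBG k c z = ∏ j, (G2 k c j z) ^ ((2*(k:ℝ)+1))⁻¹ := by
  have hk0 : (0:ℝ) < (k:ℝ) := by exact_mod_cast hk
  have hN : (0:ℝ) < 2*(k:ℝ)+1 := by positivity
  have hγ : (0:ℝ) < c/(k:ℝ) := div_pos hc hk0
  have hm : (0:ℝ) < (2*(k:ℝ)+1) * c / (k:ℝ) := by positivity
  set q : Fin (2*k+1) → Fin (2*k+1) → ℝ≥0∞ :=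
    fun a b => ENNReal.ofReal (‖z a - z b‖ ^ (-(c/(k:ℝ)))) with hq
  have hq_symm : ∀ a b, q a b = q b a := by
    intro a b; simp only [hq, norm_sub_rev]
  have step1 : ∀ j, (G2 k c j z) ^ ((2*(k:ℝ)+1))⁻¹ = ∏ i : Fin (2*k), q (j.succAbove i) j := by
    intro j
    rw [G2, ennreal_prod_rpow _ _ (inv_nonneg.mpr hN.le)]
    refine Finset.prod_congr rfl fun i _ => ?_
    simp only [hq]
    rcases eq_or_lt_of_le (norm_nonneg (z (j.succAbove i) - z j)) with h0 | hpos
    · rw [← h0, Real.zero_rpow (neg_ne_zero.mpr (ne_of_gt hm)),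
        Real.zero_rpow (neg_ne_zero.mpr (ne_of_gt hγ)), ENNReal.ofReal_zero,
        ENNReal.zero_rpow_of_pos (by positivity)]
    · rw [ENNReal.ofReal_rpow_of_pos (Real.rpow_pos_of_pos hpos _),
        ← Real.rpow_mul (le_of_lt hpos),
        show -((2*(k:ℝ)+1) * c / k) * (2*(k:ℝ)+1)⁻¹ = -(c/(k:ℝ)) by field_simp]
  rw [Finset.prod_congr rfl fun j _ => step1 j]
  have step2 : ∀ j : Fin (2*k+1),
      (∏ i : Fin (2*k), q (j.succAbove i) j) = ∏ b ∈ Finset.univ.erase j, q b j := by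
    intro j
    refine Finset.prod_nbij j.succAbove (fun a _ => Finset.mem_erase.mpr
      ⟨Fin.succAbove_ne j a, Finset.mem_univ _⟩)
      ((Fin.succAbove_right_injective (p := j)).injOn) ?_ (fun a _ => rfl)
    intro b hb
    obtain ⟨i, hi⟩ := Fin.exists_succAbove_eq (Finset.mem_erase.mp hb).1
    exact ⟨i, by simp, hi⟩
  rw [Finset.prod_congr rfl fun j _ => step2 j]
  symm
  have herase : ∀ j : Fin (2*k+1), Finset.univ.erase j = Finset.Iio j ∪ Finset.Ioi j := by
    intro j
    ext b
    simp only [Finset.mem_erase, Finset.mem_univ, and_true, Finset.mem_union,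
      Finset.mem_Iio, Finset.mem_Ioi]
    exact ne_iff_lt_or_gt
  have hdisj : ∀ j : Fin (2*k+1), Disjoint (Finset.Iio j) (Finset.Ioi j) := by
    intro j
    simp only [Finset.disjoint_left, Finset.mem_Iio, Finset.mem_Ioi]
    exact fun b h1 h2 => absurd h2 (not_lt.mpr h1.le)
  calc ∏ j, ∏ b ∈ Finset.univ.erase j, q b j
      = ∏ j, ((∏ b ∈ Finset.Iio j, q b j) * ∏ b ∈ Finset.Ioi j, q b j) :=
        Finset.prod_congr rfl fun j _ => by rw [herase j, Finset.prod_union (hdisj j)]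
    _ = (∏ j, ∏ b ∈ Finset.Iio j, q b j) * (∏ j, ∏ b ∈ Finset.Ioi j, q b j) :=
        Finset.prod_mul_distrib
    _ = (∏ a, ∏ b ∈ Finset.Ioi a, q a b) * (∏ a, ∏ b ∈ Finset.Ioi a, q a b) := by
        congr 1
        · exact Finset.prod_comm' (by
            intro x y
            simp [Finset.mem_Iio, Finset.mem_Ioi])
        · exact Finset.prod_congr rfl fun j _ => Finset.prod_congr rfl fun b _ => hq_symm b j
    _ = ∏ a, ∏ b ∈ Finset.Ioi a, (q a b * q a b) := by
        rw [← Finset.prod_mul_distrib]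
        exact Finset.prod_congr rfl fun a _ => (Finset.prod_mul_distrib).symm
    _ = FBG k c z := by
        rw [FBG]
        refine Finset.prod_congr rfl fun a _ => Finset.prod_congr rfl fun b _ => ?_
        simp only [hq]
        rcases eq_or_lt_of_le (norm_nonneg (z a - z b)) with h0 | hpos
        · rw [← h0, Real.zero_rpow (neg_ne_zero.mpr (ne_of_gt hγ)),
            Real.zero_rpow (neg_ne_zero.mpr (ne_of_gt (by positivity : (0:ℝ) < 2*c/(k:ℝ))))]
          simp
        · rw [← ENNReal.ofReal_mul (Real.rpow_nonneg hpos.le _), ← Real.rpow_add hpos]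
          congr 1
          ring


lemma integrable_side (k : ℕ) (hk : 1 ≤ k) (c : ℝ) (hc : 0 < c)
    (hlt : c < 2 * (k:ℝ) / (2 * (k:ℝ) + 1)) :
    ∃ U ∈ nhds (0 : Fin (2*k+1) → ℂ), IntegrableOn (fBG k c) U volume := by
  have hk0 : (0:ℝ) < (k:ℝ) := by exact_mod_cast hk
  have hN : (0:ℝ) < 2*(k:ℝ)+1 := by positivity
  have hm0 : (0:ℝ) < (2*(k:ℝ)+1) * c / k := by positivity
  have hm2 : (2*(k:ℝ)+1) * c / k < 2 := by
    rw [div_lt_iff₀ hk0]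
    have h1 : c * (2*(k:ℝ)+1) < 2 * (k:ℝ) := (lt_div_iff₀ hN).mp hlt
    nlinarith
  set U : Set (Fin (2*k+1) → ℂ) := Set.univ.pi (fun _ => ball (0:ℂ) 1) with hU
  have hUmeas : MeasurableSet U := MeasurableSet.univ_pi fun _ => measurableSet_ball
  have hUnhds : U ∈ nhds (0 : Fin (2*k+1) → ℂ) :=
    set_pi_mem_nhds finite_univ (fun i _ => ball_mem_nhds _ one_pos)
  refine ⟨U, hUnhds, ?_⟩
  have hmeasg : Measurable fun w : ℂ =>
      (ball (0:ℂ) 2).indicator (fun w => ENNReal.ofReal (‖w‖ ^ (-((2*(k:ℝ)+1) * c / k)))) w :=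
    ((measurable_norm.pow measurable_const).ennreal_ofReal).indicator measurableSet_ball
  set R : ℝ≥0∞ := ∫⁻ w : ℂ,
    (ball (0:ℂ) 2).indicator (fun w => ENNReal.ofReal (‖w‖ ^ (-((2*(k:ℝ)+1) * c / k)))) w with hR
  have hG2bound : ∀ j : Fin (2*k+1),
      ∫⁻ z in U, G2 k c j z ≤ volume (ball (0:ℂ) 1) * R ^ (2*k) := by
    intro j
    rw [← lintegral_indicator hUmeas]
    rw [lintegral_shear (2*k) j ((measurable_G2 k c j).indicator hUmeas)]
    have hpt : ∀ p : ℂ × (Fin (2*k) → ℂ),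
        U.indicator (G2 k c j) (shear (2*k) j p) ≤
          (ball (0:ℂ) 1).indicator (fun _ => (1:ℝ≥0∞)) p.1 *
            ∏ i : Fin (2*k), (ball (0:ℂ) 2).indicator
              (fun w => ENNReal.ofReal (‖w‖ ^ (-((2*(k:ℝ)+1) * c / k)))) (p.2 i) := by
      intro p
      by_cases hmem : shear (2*k) j p ∈ U
      · have hn : ∀ i, shear (2*k) j p i ∈ ball (0:ℂ) 1 := by
          rw [hU] at hmem
          exact Set.mem_univ_pi.mp hmem
        have h1 : ‖p.1‖ < 1 := by
          have := hn j
          rw [shear_same] at this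
          exact mem_ball_zero_iff.mp this
        have h2 : ∀ i : Fin (2*k), ‖p.2 i‖ < 2 := by
          intro i
          have hsi := hn (j.succAbove i)
          rw [shear_succAbove] at hsi
          have h3 : ‖p.1 + p.2 i‖ < 1 := mem_ball_zero_iff.mp hsi
          calc ‖p.2 i‖ = ‖p.1 + p.2 i - p.1‖ := by rw [add_sub_cancel_left]
          _ ≤ ‖p.1 + p.2 i‖ + ‖p.1‖ := norm_sub_le _ _
          _ < 2 := by linarith
        rw [Set.indicator_of_mem hmem, Set.indicator_of_mem (mem_ball_zero_iff.mpr h1), one_mul]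
        have hG2eq : G2 k c j (shear (2*k) j p)
            = ∏ i : Fin (2*k), ENNReal.ofReal (‖p.2 i‖ ^ (-((2*(k:ℝ)+1) * c / k))) := by
          rw [G2]
          refine Finset.prod_congr rfl fun i _ => ?_
          rw [shear_succAbove, shear_same, add_sub_cancel_left]
        rw [hG2eq]
        refine Finset.prod_le_prod' fun i _ => ?_
        rw [Set.indicator_of_mem (mem_ball_zero_iff.mpr (h2 i))]
      · rw [Set.indicator_of_notMem hmem]
        exact zero_le
    have hprodeq := MeasureTheory.lintegral_prod_mul (μ := (volume : Measure ℂ))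
      (ν := (volume : Measure (Fin (2*k) → ℂ)))
      (f := fun w => (ball (0:ℂ) 1).indicator (fun _ => (1:ℝ≥0∞)) w)
      (g := fun v : Fin (2*k) → ℂ => ∏ i, (ball (0:ℂ) 2).indicator
        (fun w => ENNReal.ofReal (‖w‖ ^ (-((2*(k:ℝ)+1) * c / k)))) (v i))
      ((measurable_const.indicator measurableSet_ball).aemeasurable)
      ((Finset.measurable_prod _ fun i _ => hmeasg.comp (measurable_pi_apply i)).aemeasurable)
    calc ∫⁻ p : ℂ × (Fin (2*k) → ℂ), U.indicator (G2 k c j) (shear (2*k) j p)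
          ∂((volume : Measure ℂ).prod volume)
        ≤ ∫⁻ p : ℂ × (Fin (2*k) → ℂ), ((ball (0:ℂ) 1).indicator (fun _ => (1:ℝ≥0∞)) p.1 *
            ∏ i : Fin (2*k), (ball (0:ℂ) 2).indicator
              (fun w => ENNReal.ofReal (‖w‖ ^ (-((2*(k:ℝ)+1) * c / k)))) (p.2 i))
            ∂((volume : Measure ℂ).prod volume) := lintegral_mono hpt
      _ = (∫⁻ w : ℂ, (ball (0:ℂ) 1).indicator (fun _ => (1:ℝ≥0∞)) w) *
          ∫⁻ v : Fin (2*k) → ℂ, ∏ i, (ball (0:ℂ) 2).indicator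
            (fun w => ENNReal.ofReal (‖w‖ ^ (-((2*(k:ℝ)+1) * c / k)))) (v i) := hprodeq
      _ = volume (ball (0:ℂ) 1) * R ^ (2*k) := by
          rw [lintegral_indicator measurableSet_ball, setLIntegral_const, one_mul,
            lintegral_pi_pow (2*k) hmeasg]
  have hsum : ∑ _j : Fin (2*k+1), (2*(k:ℝ)+1)⁻¹ = 1 := by
    rw [Finset.sum_const, Finset.card_univ, Fintype.card_fin, nsmul_eq_mul]
    push_cast
    field_simp
  have hH := ENNReal.lintegral_prod_norm_pow_le (μ := volume.restrict U) Finset.univ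
      (f := fun j z => G2 k c j z) (fun j _ => (measurable_G2 k c j).aemeasurable)
      (p := fun _ => (2*(k:ℝ)+1)⁻¹) hsum (fun j _ => inv_nonneg.mpr hN.le)
  have hfin : ∫⁻ z in U, FBG k c z < ⊤ := by
    have hmain : ∫⁻ z in U, FBG k c z
        ≤ ∏ j : Fin (2*k+1), (∫⁻ z in U, G2 k c j z) ^ (2*(k:ℝ)+1)⁻¹ := by
      calc ∫⁻ z in U, FBG k c z
          = ∫⁻ z in U, ∏ j, (G2 k c j z) ^ (2*(k:ℝ)+1)⁻¹ :=
            lintegral_congr fun z => FBG_eq_prod_G2 k hk c hc z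
        _ ≤ _ := hH
    refine lt_of_le_of_lt hmain ?_
    have hfactor : ∀ j : Fin (2*k+1), (∫⁻ z in U, G2 k c j z) ^ (2*(k:ℝ)+1)⁻¹ ≠ ⊤ := by
      intro j
      refine (ENNReal.rpow_lt_top_of_nonneg (inv_nonneg.mpr hN.le) ?_).ne
      refine ((hG2bound j).trans_lt ?_).ne
      exact ENNReal.mul_lt_top measure_ball_lt_top
        (ENNReal.pow_lt_top (radial_lt_top hm0 hm2))
    exact ENNReal.prod_lt_top fun j _ => (hfactor j).lt_top
  refine ⟨(measurable_fBG k c).aestronglyMeasurable, ?_⟩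
  rw [hasFiniteIntegral_iff_ofReal (Filter.Eventually.of_forall fun z => fBG_nonneg k c z)]
  have : ∀ z, ENNReal.ofReal (fBG k c z) = FBG k c z := ofReal_fBG k c
  calc ∫⁻ z in U, ENNReal.ofReal (fBG k c z) = ∫⁻ z in U, FBG k c z :=
        lintegral_congr fun z => this z
    _ < ⊤ := hfin

lemma shear_succ (n : ℕ) (p : ℂ × (Fin n → ℂ)) (i : Fin n) :
    shear n 0 p i.succ = p.1 + p.2 i := by
  rw [← Fin.zero_succAbove]
  exact shear_succAbove n 0 p i



/-- The function after factoring out the `0`-th coordinate. -/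
def Gdiv (k : ℕ) (c : ℝ) (v : Fin (2*k) → ℂ) : ℝ≥0∞ :=
  (∏ i : Fin (2*k), ENNReal.ofReal (‖v i‖ ^ (-(2*c/(k:ℝ))))) *
    ∏ i : Fin (2*k), ∏ j ∈ Finset.Ioi i, ENNReal.ofReal (‖v i - v j‖ ^ (-(2*c/(k:ℝ))))

lemma measurable_Gdiv (k : ℕ) (c : ℝ) : Measurable (Gdiv k c) := by
  refine Measurable.mul ?_ ?_
  · exact Finset.measurable_prod _ fun i _ =>
      (((measurable_pi_apply i).norm).pow measurable_const).ennreal_ofReal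
  · exact Finset.measurable_prod _ fun i _ => Finset.measurable_prod _ fun j _ =>
      ((((measurable_pi_apply i).sub (measurable_pi_apply j)).norm).pow
        measurable_const).ennreal_ofReal

lemma count_aux (k : ℕ) : (2*k + ∑ i : Fin (2*k), (Finset.Ioi i).card) = k*(2*k+1) := by
  have h1 : ∀ i : Fin (2*k), (Finset.Ioi i).card = 2*k - 1 - (i : ℕ) := fun i => by
    simpa using Fin.card_Ioi (a := i)
  rw [Finset.sum_congr rfl fun i _ => h1 i]
  rw [Fin.sum_univ_eq_sum_range (fun j => 2*k - 1 - j) (2*k)]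
  have h2 := Finset.sum_range_reflect (fun j => j) (2*k)
  rw [h2]
  have h3 := Finset.sum_range_id_mul_two (2*k)
  refine Nat.eq_of_mul_eq_mul_right (show 0 < 2 by norm_num) ?_
  rw [add_mul, h3]
  cases k with
  | zero => norm_num
  | succ k' =>
    have h4 : 2*(k'+1) - 1 = 2*k'+1 := by omega
    rw [h4]
    ring

lemma FBG_shear (k : ℕ) (c : ℝ) (p : ℂ × (Fin (2*k) → ℂ)) :
    FBG k c (shear (2*k) 0 p) = Gdiv k c p.2 := by
  rw [FBG, Fin.prod_univ_succ, Gdiv]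
  congr 1
  · rw [Fin.prod_Ioi_zero]
    refine Finset.prod_congr rfl fun i _ => ?_
    rw [shear_same, shear_succ, sub_add_cancel_left, norm_neg]
  · refine Finset.prod_congr rfl fun i _ => ?_
    rw [Fin.prod_Ioi_succ]
    refine Finset.prod_congr rfl fun j _ => ?_
    rw [shear_succ, shear_succ, add_sub_add_left_eq_sub]

lemma Gdiv_smul (k : ℕ) (c : ℝ) {t : ℝ} (ht : 0 < t) (v : Fin (2*k) → ℂ) :
    Gdiv k c (t • v)
      = ENNReal.ofReal (t ^ (-(2*c/(k:ℝ)))) ^ (k*(2*k+1)) * Gdiv k c v := by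
  set C := ENNReal.ofReal (t ^ (-(2*c/(k:ℝ)))) with hC
  have hfac : ∀ x : ℂ, ENNReal.ofReal (‖t • x‖ ^ (-(2*c/(k:ℝ))))
      = C * ENNReal.ofReal (‖x‖ ^ (-(2*c/(k:ℝ)))) := by
    intro x
    rw [norm_smul, Real.norm_eq_abs, abs_of_pos ht, Real.mul_rpow ht.le (norm_nonneg x),
      ENNReal.ofReal_mul (Real.rpow_nonneg ht.le _)]
  have h1 : ∏ i : Fin (2*k), ENNReal.ofReal (‖(t • v) i‖ ^ (-(2*c/(k:ℝ))))
      = C ^ (2*k) * ∏ i : Fin (2*k), ENNReal.ofReal (‖v i‖ ^ (-(2*c/(k:ℝ)))) := by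
    have : ∀ i : Fin (2*k), ENNReal.ofReal (‖(t • v) i‖ ^ (-(2*c/(k:ℝ))))
        = C * ENNReal.ofReal (‖v i‖ ^ (-(2*c/(k:ℝ)))) := fun i => by
      rw [Pi.smul_apply]; exact hfac (v i)
    rw [Finset.prod_congr rfl fun i _ => this i, Finset.prod_mul_distrib, Finset.prod_const,
      Finset.card_univ, Fintype.card_fin]
  have h2 : ∏ i : Fin (2*k), ∏ j ∈ Finset.Ioi i,
        ENNReal.ofReal (‖(t • v) i - (t • v) j‖ ^ (-(2*c/(k:ℝ))))
      = C ^ (∑ i : Fin (2*k), (Finset.Ioi i).card) *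
        ∏ i : Fin (2*k), ∏ j ∈ Finset.Ioi i,
          ENNReal.ofReal (‖v i - v j‖ ^ (-(2*c/(k:ℝ)))) := by
    have hin : ∀ i : Fin (2*k), ∏ j ∈ Finset.Ioi i,
        ENNReal.ofReal (‖(t • v) i - (t • v) j‖ ^ (-(2*c/(k:ℝ))))
        = C ^ (Finset.Ioi i).card * ∏ j ∈ Finset.Ioi i,
          ENNReal.ofReal (‖v i - v j‖ ^ (-(2*c/(k:ℝ)))) := by
      intro i
      have : ∀ j : Fin (2*k), ENNReal.ofReal (‖(t • v) i - (t • v) j‖ ^ (-(2*c/(k:ℝ))))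
          = C * ENNReal.ofReal (‖v i - v j‖ ^ (-(2*c/(k:ℝ)))) := fun j => by
        rw [Pi.smul_apply, Pi.smul_apply, ← smul_sub]; exact hfac (v i - v j)
      rw [Finset.prod_congr rfl fun j _ => this j, Finset.prod_mul_distrib, Finset.prod_const]
    rw [Finset.prod_congr rfl fun i _ => hin i, Finset.prod_mul_distrib,
      Finset.prod_pow_eq_pow_sum]
  rw [Gdiv, Gdiv, h1, h2, ← count_aux k, pow_add]
  ring

lemma lintegral_double (n : ℕ) {h : (Fin n → ℂ) → ℝ≥0∞} (hh : Measurable h) :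
    ∫⁻ v, h ((2:ℝ) • v)
      = ENNReal.ofReal ((2:ℝ)⁻¹ ^ (Module.finrank ℝ (Fin n → ℂ))) * ∫⁻ v, h v := by
  have hφ : Measurable fun v : Fin n → ℂ => (2:ℝ) • v := (continuous_const_smul _).measurable
  have hmap : Measure.map (fun v : Fin n → ℂ => (2:ℝ) • v) volume
      = ENNReal.ofReal ((2:ℝ)⁻¹ ^ (Module.finrank ℝ (Fin n → ℂ))) • volume := by
    ext s hs
    rw [Measure.map_apply hφ hs, Set.preimage_smul₀ (two_ne_zero) s, Measure.smul_apply,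
      smul_eq_mul, Measure.addHaar_smul volume]
    congr 1
    rw [abs_of_pos (by positivity)]
  rw [← lintegral_map hh hφ, hmap, lintegral_smul_measure, smul_eq_mul]

lemma lintegral_polydisc_eq_top (k : ℕ) (hk : 1 ≤ k) (c : ℝ) (hc : 0 < c)
    (hge : 2 * (k:ℝ) / (2 * (k:ℝ) + 1) ≤ c) {r : ℝ} (hr : 0 < r) :
    ∫⁻ v in Set.univ.pi (fun _ : Fin (2*k) => ball (0:ℂ) r), Gdiv k c v = ⊤ := by
  have hk0 : (0:ℝ) < (k:ℝ) := by exact_mod_cast hk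
  have hN : (0:ℝ) < 2*(k:ℝ)+1 := by positivity
  set d : ℕ := Module.finrank ℝ (Fin (2*k) → ℂ) with hd
  have hdval : d = 4 * k := by
    rw [hd]
    simp [Module.finrank_pi_fintype, Complex.finrank_real_complex]
    ring
  set P : ℕ := k * (2*k+1) with hP
  have hkey : (d:ℝ) ≤ (2*c/(k:ℝ)) * (P:ℝ) := by
    have h1 : 2 * (k:ℝ) ≤ c * (2*(k:ℝ)+1) := by
      have := (div_le_iff₀ hN).mp hge
      linarith
    rw [hdval, hP]
    push_cast
    have h2 : (2*c/(k:ℝ)) * ((k:ℝ) * (2*(k:ℝ)+1)) = 2 * (c * (2*(k:ℝ)+1)) := by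
      field_simp
    rw [h2]
    push_cast
    linarith
  set poly : ℝ → Set (Fin (2*k) → ℂ) := fun ρ => Set.univ.pi (fun _ => ball (0:ℂ) ρ) with hpoly
  set Ann : ℝ → Set (Fin (2*k) → ℂ) := fun ρ => poly ρ \ poly (ρ/2) with hAnn
  have hpolymeas : ∀ ρ, MeasurableSet (poly ρ) := fun ρ =>
    MeasurableSet.univ_pi fun _ => measurableSet_ball
  have hAnnmeas : ∀ ρ, MeasurableSet (Ann ρ) := fun ρ => (hpolymeas ρ).diff (hpolymeas _)
  set J : ℝ → ℝ≥0∞ := fun ρ => ∫⁻ v in Ann ρ, Gdiv k c v with hJ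
  have hmempoly : ∀ (σ : ℝ) (v : Fin (2*k) → ℂ), ((2:ℝ) • v ∈ poly σ) ↔ v ∈ poly (σ/2) := by
    intro σ v
    rw [hpoly]
    simp only [Set.mem_univ_pi, mem_ball_zero_iff, Pi.smul_apply, norm_smul, Real.norm_eq_abs]
    constructor
    · intro h i
      have := h i
      rw [abs_of_pos (by norm_num : (0:ℝ) < 2)] at this
      linarith
    · intro h i
      rw [abs_of_pos (by norm_num : (0:ℝ) < 2)]
      have := h i
      linarith
  have hstep : ∀ ρ : ℝ, 0 < ρ → J ρ ≤ J (ρ/2) := by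
    intro ρ hρ
    set C := ENNReal.ofReal ((2:ℝ) ^ (-(2*c/(k:ℝ)))) with hC
    have hpoint : ∀ v : Fin (2*k) → ℂ,
        (Ann ρ).indicator (Gdiv k c) ((2:ℝ) • v)
          = C ^ P * (Ann (ρ/2)).indicator (Gdiv k c) v := by
      intro v
      have hmemann : ((2:ℝ) • v ∈ Ann ρ) ↔ v ∈ Ann (ρ/2) := by
        rw [hAnn]
        simp only [Set.mem_diff]
        rw [hmempoly ρ v, hmempoly (ρ/2) v]
      by_cases hv : v ∈ Ann (ρ/2)
      · rw [Set.indicator_of_mem (hmemann.mpr hv), Set.indicator_of_mem hv,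
          Gdiv_smul k c (by norm_num : (0:ℝ) < 2) v]
      · rw [Set.indicator_of_notMem (fun hmem => hv (hmemann.mp hmem)),
          Set.indicator_of_notMem hv, mul_zero]
    have hmeasind : Measurable ((Ann ρ).indicator (Gdiv k c)) :=
      (measurable_Gdiv k c).indicator (hAnnmeas ρ)
    have hid := lintegral_double (2*k) hmeasind
    rw [lintegral_congr hpoint] at hid
    rw [lintegral_const_mul _ ((measurable_Gdiv k c).indicator (hAnnmeas (ρ/2)))] at hid
    rw [lintegral_indicator (hAnnmeas ρ), lintegral_indicator (hAnnmeas (ρ/2))] at hid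
    -- hid : C ^ P * J (ρ/2) = ofReal (2⁻¹ ^ d) * J ρ
    have hCle : C ^ P ≤ ENNReal.ofReal ((2:ℝ)⁻¹ ^ d) := by
      have e1 : C ^ P = ENNReal.ofReal (((2:ℝ) ^ (-(2*c/(k:ℝ)))) ^ P) := by
        rw [hC, ENNReal.ofReal_pow (Real.rpow_nonneg (by norm_num) _)]
      have e2 : ((2:ℝ) ^ (-(2*c/(k:ℝ)))) ^ P = (2:ℝ) ^ (-(2*c/(k:ℝ)) * P) := by
        rw [← Real.rpow_natCast ((2:ℝ) ^ (-(2*c/(k:ℝ)))) P, ← Real.rpow_mul (by norm_num)]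
      have e3 : ((2:ℝ)⁻¹) ^ d = (2:ℝ) ^ (-(d:ℝ)) := by
        rw [← Real.rpow_natCast ((2:ℝ)⁻¹) d, ← Real.rpow_neg_one (2:ℝ),
          ← Real.rpow_mul (by norm_num)]
        norm_num
      rw [e1, e2, e3]
      refine ENNReal.ofReal_le_ofReal ?_
      refine Real.rpow_le_rpow_of_exponent_le (by norm_num) ?_
      have : (0:ℝ) ≤ 2*c/(k:ℝ) := by positivity
      nlinarith [hkey]
    have hc0pos : (0:ℝ) < (2:ℝ)⁻¹ ^ d := by positivity
    have hne0 : ENNReal.ofReal ((2:ℝ)⁻¹ ^ d) ≠ 0 := by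
      simp [ENNReal.ofReal_eq_zero, not_le, hc0pos]
    have hnetop : ENNReal.ofReal ((2:ℝ)⁻¹ ^ d) ≠ ⊤ := ENNReal.ofReal_ne_top
    have hfinal : ENNReal.ofReal ((2:ℝ)⁻¹ ^ d) * J ρ ≤ ENNReal.ofReal ((2:ℝ)⁻¹ ^ d) * J (ρ/2) := by
      calc ENNReal.ofReal ((2:ℝ)⁻¹ ^ d) * J ρ = C ^ P * J (ρ/2) := hid.symm
      _ ≤ ENNReal.ofReal ((2:ℝ)⁻¹ ^ d) * J (ρ/2) := mul_le_mul_left hCle _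
    exact (ENNReal.mul_le_mul_iff_right hne0 hnetop).mp hfinal
  have hiter : ∀ n : ℕ, J r ≤ J (r / 2^n) := by
    intro n
    induction n with
    | zero => simp
    | succ n ih =>
      have : r / 2^(n+1) = (r / 2^n) / 2 := by
        rw [pow_succ]
        ring
      rw [this]
      exact ih.trans (hstep _ (by positivity))
  -- positivity of J r
  have hJpos : 0 < J r := by
    classical
    set i0 : Fin (2*k) := ⟨0, by omega⟩ with hi0
    set O : Set (Fin (2*k) → ℂ) := poly r ∩ ((fun v => ‖v i0‖) ⁻¹' Set.Ioi (r/2)) with hO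
    have hOopen : IsOpen O := by
      refine IsOpen.inter ?_ ?_
      · exact isOpen_set_pi finite_univ fun _ _ => isOpen_ball
      · exact (continuous_norm.comp (continuous_apply i0)).isOpen_preimage _ isOpen_Ioi
    have hOne : O.Nonempty := by
      refine ⟨Pi.single i0 ((3*r/4 : ℝ) : ℂ), ?_, ?_⟩
      · refine Set.mem_univ_pi.mpr fun i => ?_
        rcases eq_or_ne i i0 with rfl | hne
        · rw [Pi.single_eq_same, mem_ball_zero_iff, Complex.norm_real, Real.norm_eq_abs,
            abs_of_pos (by positivity)]
          linarith
        · rw [Pi.single_eq_of_ne hne, mem_ball_zero_iff, norm_zero]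
          exact hr
      · simp only [Set.mem_preimage, Set.mem_Ioi, Pi.single_eq_same, Complex.norm_real,
          Real.norm_eq_abs]
        rw [abs_of_pos (by positivity)]
        linarith
    have hOsub : O ⊆ Ann r := by
      intro v hv
      refine ⟨hv.1, ?_⟩
      intro hmem
      have h1 : ‖v i0‖ < r/2 := by
        have := Set.mem_univ_pi.mp hmem i0
        exact mem_ball_zero_iff.mp this
      have h2 : r/2 < ‖v i0‖ := hv.2
      linarith
    set Z : Set (Fin (2*k) → ℂ) :=
      (⋃ i, {v : Fin (2*k) → ℂ | v i = 0}) ∪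
        ⋃ i, ⋃ j, {v : Fin (2*k) → ℂ | i ≠ j ∧ v i = v j} with hZ
    have hZnull : volume Z = 0 := by
      rw [hZ]
      refine measure_union_null ?_ ?_
      · refine measure_iUnion_null fun i => ?_
        rw [MeasureTheory.volume_pi]
        exact Measure.pi_hyperplane _ i 0
      · refine measure_iUnion_null fun i => measure_iUnion_null fun j => ?_
        rcases eq_or_ne i j with rfl | hne
        · simp
        · set L : (Fin (2*k) → ℂ) →ₗ[ℝ] ℂ :=
            (LinearMap.proj (R := ℝ) (φ := fun _ : Fin (2*k) => ℂ) i)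
              - LinearMap.proj j with hL
          have hset : {v : Fin (2*k) → ℂ | i ≠ j ∧ v i = v j} ⊆ (LinearMap.ker L : Set _) := by
            intro v hv
            simp only [SetLike.mem_coe, LinearMap.mem_ker, hL, LinearMap.sub_apply,
              LinearMap.proj_apply]
            rw [sub_eq_zero]
            exact hv.2
          refine measure_mono_null hset ?_
          refine Measure.addHaar_submodule volume _ ?_
          intro htop
          have hmem : (Pi.single i (1:ℂ) : Fin (2*k) → ℂ) ∈ LinearMap.ker L := by
            rw [htop]; trivial
          rw [LinearMap.mem_ker, hL, LinearMap.sub_apply, LinearMap.proj_apply,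
            LinearMap.proj_apply, Pi.single_eq_same, Pi.single_eq_of_ne (Ne.symm hne),
            sub_zero] at hmem
          exact one_ne_zero hmem
    have hsupp : ∀ v, v ∈ O \ Z → Gdiv k c v ≠ 0 := by
      intro v hv
      have hvz : ∀ i, v i ≠ 0 := by
        intro i hzero
        exact hv.2 (Or.inl (Set.mem_iUnion.mpr ⟨i, hzero⟩))
      have hvij : ∀ i j : Fin (2*k), i ≠ j → v i ≠ v j := by
        intro i j hne heq
        exact hv.2 (Or.inr (Set.mem_iUnion.mpr ⟨i, Set.mem_iUnion.mpr ⟨j, hne, heq⟩⟩))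
      rw [Gdiv]
      refine mul_ne_zero ?_ ?_
      · rw [Finset.prod_ne_zero_iff]
        intro i _
        exact (ENNReal.ofReal_pos.mpr
          (Real.rpow_pos_of_pos (norm_pos_iff.mpr (hvz i)) _)).ne'
      · rw [Finset.prod_ne_zero_iff]
        intro i _
        rw [Finset.prod_ne_zero_iff]
        intro j hj
        have hij : i ≠ j := ne_of_lt (Finset.mem_Ioi.mp hj)
        exact (ENNReal.ofReal_pos.mpr
          (Real.rpow_pos_of_pos (norm_pos_iff.mpr (sub_ne_zero.mpr (hvij i j hij))) _)).ne'
    rw [hJ]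
    rw [lintegral_pos_iff_support (measurable_Gdiv k c)]
    have hle : volume (O \ Z) ≤ (volume.restrict (Ann r)) (Function.support (Gdiv k c)) := by
      rw [Measure.restrict_apply' (hAnnmeas r)]
      refine measure_mono ?_
      intro v hv
      exact ⟨hsupp v hv, hOsub hv.1⟩
    have hpos : 0 < volume (O \ Z) := by
      rw [measure_diff_null hZnull]
      exact hOopen.measure_pos volume hOne
    exact lt_of_lt_of_le hpos hle
  -- sum over disjoint annuli
  have hsub2 : ∀ n : ℕ, Ann (r / 2^n) ⊆ poly r := by
    intro n v hv
    refine Set.pi_mono (fun i _ => ball_subset_ball ?_) hv.1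
    calc r / 2^n ≤ r / 1 := by
          refine div_le_div_of_nonneg_left hr.le one_pos ?_
          exact one_le_pow₀ (by norm_num)
    _ = r := by norm_num
  have hdisj : Pairwise (Function.onFun Disjoint fun n : ℕ => Ann (r / 2^n)) := by
    intro a b hab
    wlog hlt : a < b generalizing a b
    · exact (this hab.symm (by omega)).symm
    rw [Function.onFun, Set.disjoint_left]
    intro v hva hvb
    have h1 : ∀ i, ‖v i‖ < r / 2^b := by
      intro i
      have := Set.mem_univ_pi.mp hvb.1 i
      exact mem_ball_zero_iff.mp this
    have h2 : ¬ (v ∈ poly (r / 2^a / 2)) := hva.2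
    refine h2 (Set.mem_univ_pi.mpr fun i => ?_)
    rw [mem_ball_zero_iff]
    have h3 : r / 2^b ≤ r / 2^a / 2 := by
      rw [div_div, ← pow_succ]
      refine div_le_div_of_nonneg_left hr.le (by positivity) ?_
      exact pow_le_pow_right₀ (by norm_num) (by omega)
    exact lt_of_lt_of_le (h1 i) h3
  have hunion := lintegral_iUnion (μ := (volume : Measure (Fin (2*k) → ℂ))) (fun n : ℕ => hAnnmeas (r / 2^n)) hdisj (Gdiv k c)
  have htop : ∑' n : ℕ, J (r / 2^n) = ⊤ := by
    rw [eq_top_iff]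
    calc (⊤ : ℝ≥0∞) = ∑' _n : ℕ, J r := (ENNReal.tsum_const_eq_top_of_ne_zero hJpos.ne').symm
    _ ≤ ∑' n : ℕ, J (r / 2^n) := ENNReal.tsum_le_tsum hiter
  rw [eq_top_iff]
  calc (⊤ : ℝ≥0∞) = ∑' n : ℕ, J (r / 2^n) := htop.symm
  _ = ∫⁻ v in ⋃ n : ℕ, Ann (r / 2^n), Gdiv k c v := hunion.symm
  _ ≤ ∫⁻ v in Set.univ.pi (fun _ : Fin (2*k) => ball (0:ℂ) r), Gdiv k c v :=
      lintegral_mono_set (Set.iUnion_subset hsub2)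

lemma divergent_side (k : ℕ) (hk : 1 ≤ k) (c : ℝ) (hc : 0 < c)
    (hge : 2 * (k:ℝ) / (2 * (k:ℝ) + 1) ≤ c) (U : Set (Fin (2*k+1) → ℂ))
    (hU : U ∈ nhds (0 : Fin (2*k+1) → ℂ))
    (hInt : IntegrableOn (fBG k c) U volume) : False := by
  obtain ⟨ε, hε, hball⟩ := Metric.mem_nhds_iff.mp hU
  have hIball : IntegrableOn (fBG k c) (ball 0 ε) volume := hInt.mono_set hball
  have hfin : ∫⁻ z in ball (0 : Fin (2*k+1) → ℂ) ε, FBG k c z < ⊤ := by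
    have h2 := (hasFiniteIntegral_iff_ofReal
      (Filter.Eventually.of_forall fun z => fBG_nonneg k c z)).mp hIball.2
    calc ∫⁻ z in ball (0 : Fin (2*k+1) → ℂ) ε, FBG k c z
        = ∫⁻ z in ball (0 : Fin (2*k+1) → ℂ) ε, ENNReal.ofReal (fBG k c z) :=
          lintegral_congr fun z => (ofReal_fBG k c z).symm
      _ < ⊤ := h2
  have hkey : ∫⁻ z in ball (0 : Fin (2*k+1) → ℂ) ε, FBG k c z
      = ∫⁻ p : ℂ × (Fin (2*k) → ℂ),
          (ball (0 : Fin (2*k+1) → ℂ) ε).indicator (FBG k c) (shear (2*k) 0 p)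
          ∂((volume : Measure ℂ).prod volume) := by
    rw [← lintegral_indicator measurableSet_ball,
      lintegral_shear (2*k) 0 ((measurable_FBG k c).indicator measurableSet_ball)]
  have hpt : ∀ p : ℂ × (Fin (2*k) → ℂ),
      (ball (0:ℂ) (ε/2)).indicator (fun _ => (1:ℝ≥0∞)) p.1 *
        (Set.univ.pi fun _ : Fin (2*k) => ball (0:ℂ) (ε/2)).indicator (Gdiv k c) p.2
        ≤ (ball (0 : Fin (2*k+1) → ℂ) ε).indicator (FBG k c) (shear (2*k) 0 p) := by
    intro p
    by_cases h1 : p.1 ∈ ball (0:ℂ) (ε/2)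
    · by_cases h2 : p.2 ∈ (Set.univ.pi fun _ : Fin (2*k) => ball (0:ℂ) (ε/2))
      · have hp1 : ‖p.1‖ < ε/2 := mem_ball_zero_iff.mp h1
        have hp2 : ∀ i, ‖p.2 i‖ < ε/2 := fun i =>
          mem_ball_zero_iff.mp (Set.mem_univ_pi.mp h2 i)
        have hmem : shear (2*k) 0 p ∈ ball (0 : Fin (2*k+1) → ℂ) ε := by
          rw [mem_ball_zero_iff, pi_norm_lt_iff hε]
          intro i
          refine Fin.cases ?_ ?_ i
          · rw [shear_same]
            linarith
          · intro i'
            rw [shear_succ]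
            calc ‖p.1 + p.2 i'‖ ≤ ‖p.1‖ + ‖p.2 i'‖ := norm_add_le _ _
            _ < ε := by linarith [hp2 i']
        rw [Set.indicator_of_mem h1, Set.indicator_of_mem h2, Set.indicator_of_mem hmem,
          one_mul, FBG_shear]
      · rw [Set.indicator_of_notMem h2, mul_zero]
        exact zero_le
    · rw [Set.indicator_of_notMem h1, zero_mul]
      exact zero_le
  have hprod := MeasureTheory.lintegral_prod_mul (μ := (volume : Measure ℂ))
    (ν := (volume : Measure (Fin (2*k) → ℂ)))
    (f := fun w => (ball (0:ℂ) (ε/2)).indicator (fun _ => (1:ℝ≥0∞)) w)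
    (g := fun v => (Set.univ.pi fun _ : Fin (2*k) => ball (0:ℂ) (ε/2)).indicator (Gdiv k c) v)
    ((measurable_const.indicator measurableSet_ball).aemeasurable)
    (((measurable_Gdiv k c).indicator
      (MeasurableSet.univ_pi fun _ => measurableSet_ball)).aemeasurable)
  have hlow : volume (ball (0:ℂ) (ε/2)) *
      ∫⁻ v in (Set.univ.pi fun _ : Fin (2*k) => ball (0:ℂ) (ε/2)), Gdiv k c v
      ≤ ∫⁻ z in ball (0 : Fin (2*k+1) → ℂ) ε, FBG k c z := by
    rw [hkey]
    calc volume (ball (0:ℂ) (ε/2)) *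
        ∫⁻ v in (Set.univ.pi fun _ : Fin (2*k) => ball (0:ℂ) (ε/2)), Gdiv k c v
        = (∫⁻ w : ℂ, (ball (0:ℂ) (ε/2)).indicator (fun _ => (1:ℝ≥0∞)) w) *
          ∫⁻ v, (Set.univ.pi fun _ : Fin (2*k) => ball (0:ℂ) (ε/2)).indicator (Gdiv k c) v := by
          rw [lintegral_indicator measurableSet_ball, setLIntegral_const, one_mul,
            lintegral_indicator (MeasurableSet.univ_pi fun _ => measurableSet_ball)]
      _ = ∫⁻ p : ℂ × (Fin (2*k) → ℂ),
            ((ball (0:ℂ) (ε/2)).indicator (fun _ => (1:ℝ≥0∞)) p.1 *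
              (Set.univ.pi fun _ : Fin (2*k) => ball (0:ℂ) (ε/2)).indicator (Gdiv k c) p.2)
            ∂((volume : Measure ℂ).prod volume) := hprod.symm
      _ ≤ _ := lintegral_mono hpt
  have htop : ∫⁻ v in (Set.univ.pi fun _ : Fin (2*k) => ball (0:ℂ) (ε/2)), Gdiv k c v = ⊤ :=
    lintegral_polydisc_eq_top k hk c hc hge (by linarith)
  rw [htop] at hlow
  have hballpos : volume (ball (0:ℂ) (ε/2)) ≠ 0 :=
    (measure_ball_pos volume 0 (by linarith)).ne'
  rw [ENNReal.mul_top hballpos] at hlow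
  exact absurd (lt_of_le_of_lt hlow hfin) (lt_irrefl ⊤)


end BermanGibbs

open BermanGibbs in
/-- The Berman–Gibbs threshold computation for `P^1`: with `N = 2k + 1`, the function
`z ↦ ∏_{i<j} |z_i - z_j|^{-2c/k}` on `ℂ^N` is integrable near the origin iff
`c < 2k/(2k+1)`; i.e. the log canonical threshold of `(1/k) D_k` along the diagonal is
`2k/(2k+1)`, so `γ(P^1) = 1`. -/
theorem berman_gibbs_P1 (k : ℕ) (hk : 1 ≤ k) (c : ℝ) (hc : 0 < c) :
    (∃ U ∈ nhds (0 : Fin (2 * k + 1) → ℂ), IntegrableOn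
        (fun z : Fin (2 * k + 1) → ℂ =>
          ∏ i : Fin (2 * k + 1), ∏ j ∈ Finset.Ioi i,
            ‖z i - z j‖ ^ (-(2 * c / (k : ℝ))))
        U volume) ↔ c < 2 * (k : ℝ) / (2 * (k : ℝ) + 1) := by
  constructor
  · rintro ⟨U, hU, hInt⟩
    by_contra h
    push_neg at h
    exact BermanGibbs.divergent_side k hk c hc h U hU hInt
  · intro hlt
    exact BermanGibbs.integrable_side k hk c hc hlt
end
end
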